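/- Let G be a connected k-regular graph on n vertices with distinct adjacency eigenvalues λ_0 = k, λ_1, …, λ_r and eigenspaces E_0 = span{j}, E_1, …, E_r, and let U ⊆ V. Suppose I_U E_i ⊆ j^⊥ for every i ≥ 2, while I_U E_0 ⊄ j^⊥ and I_U E_1 ⊄ j^⊥ (i.e., the only main eigenvalues of 2D' − (a + b)J are μ_0 and μ_1). Then 2|U| ≠ n, and the main angles satisfy n β_0² = (n − 2|U|)²/n and n β_1² = n − (n − 2|U|)²/n. -/

import Mathlib

set_option linter.unusedSectionVars false
set_option linter.unusedTactic false
set_option linter.unreachableTactic false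
set_option maxHeartbeats 1000000



open Matrix

/-- The eigenspace of a real matrix `A` (acting by `mulVec`) for the value `μ`. -/
noncomputable def eigSp {V : Type*} [Fintype V] [DecidableEq V]
    (A : Matrix V V ℝ) (μ : ℝ) : Submodule ℝ (V → ℝ) :=
  Module.End.eigenspace (Matrix.mulVecLin A) μ

/-- The switching matrix `I_U`: diagonal with entry `−1` on `U` and `+1` off `U`. -/
noncomputable def switchMat {V : Type*} [Fintype V] [DecidableEq V]
    (U : Finset V) : Matrix V V ℝ :=
  Matrix.diagonal (fun v => if v ∈ U then -1 else 1)

/-- The main angle of a subspace `W` of `ℝ^V`: `(1/√n)‖P j‖`, where `P` is the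
orthogonal projection onto `W` and `j` is the all-ones vector. -/
noncomputable def mainAngle {V : Type*} [Fintype V] [DecidableEq V]
    (W : Submodule ℝ (V → ℝ)) : ℝ :=
  (1 / Real.sqrt (Fintype.card V)) *
    ‖(Submodule.orthogonalProjection (W.map ((WithLp.linearEquiv 2 ℝ (V → ℝ)).symm.toLinearMap)))
      ((WithLp.linearEquiv 2 ℝ (V → ℝ)).symm (fun _ => 1))‖

section Aux
variable {V : Type*} [Fintype V] [DecidableEq V]

lemma switch_mulVec (U : Finset V) (x : V → ℝ) (i : V) :
    (switchMat U).mulVec x i = (if i ∈ U then (-1:ℝ) else 1) * x i := by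
  simp [switchMat, mulVec_diagonal]

lemma inner_E (x y : V → ℝ) :
    (inner ℝ ((WithLp.linearEquiv 2 ℝ (V → ℝ)).symm x) ((WithLp.linearEquiv 2 ℝ (V → ℝ)).symm y) : ℝ)
      = x ⬝ᵥ y := by
  simp [PiLp.inner_apply, dotProduct, RCLike.inner_apply, mul_comm]

lemma dot_switch (U : Finset V) (x y : V → ℝ) :
    ((switchMat U).mulVec x) ⬝ᵥ ((switchMat U).mulVec y) = x ⬝ᵥ y := by
  simp only [dotProduct, switch_mulVec]
  refine Finset.sum_congr rfl fun i _ => ?_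
  by_cases h : i ∈ U <;> simp [h] <;> ring

lemma switch_invol (U : Finset V) (x : V → ℝ) :
    (switchMat U).mulVec ((switchMat U).mulVec x) = x := by
  funext i
  simp only [switch_mulVec]
  by_cases h : i ∈ U <;> simp [h]

lemma eig_orth (A : Matrix V V ℝ) (hsymm : A.IsSymm) {lam mu : ℝ} (hne : lam ≠ mu)
    {v w : V → ℝ} (hv : A.mulVec v = lam • v) (hw : A.mulVec w = mu • w) :
    v ⬝ᵥ w = 0 := by
  have h1 : (A.mulVec v) ⬝ᵥ w = lam * (v ⬝ᵥ w) := by rw [hv, smul_dotProduct]; rfl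
  have h2 : v ⬝ᵥ (A.mulVec w) = mu * (v ⬝ᵥ w) := by rw [hw, dotProduct_smul]; rfl
  have h3 : (A.mulVec v) ⬝ᵥ w = v ⬝ᵥ (A.mulVec w) := by
    rw [Matrix.dotProduct_mulVec, ← Matrix.mulVec_transpose, hsymm.eq]
  have h4 : (lam - mu) * (v ⬝ᵥ w) = 0 := by
    have := h1.symm.trans (h3.trans h2); linarith
  rcases mul_eq_zero.1 h4 with h | h
  · exact absurd (sub_eq_zero.1 h) hne
  · exact h

end Aux


/-- let `G` be a connected `k`-regular graph on `n` vertices with distinct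
adjacency eigenvalues `λ_0 = k, λ_1, …, λ_r` and eigenspaces `E_0 = span{j}, E_1, …, E_r`
and `U ⊆ V`.  If `I_U E_i ⊆ j^⊥` for all `i ≥ 2` while `I_U E_0 ⊄ j^⊥` and
`I_U E_1 ⊄ j^⊥` (only `μ_0, μ_1` are main), then `2|U| ≠ n` and the main angles satisfy
`n β_0² = (n − 2|U|)²/n` and `n β_1² = n − (n − 2|U|)²/n`. -/
theorem stmt6 {V : Type*} [Fintype V] [DecidableEq V]
    (G : SimpleGraph V) [DecidableRel G.Adj] (k : ℕ)
    (hreg : G.IsRegularOfDegree k) (hconn : G.Connected)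
    (r : ℕ) (hr : 1 ≤ r) (lam : ℕ → ℝ) (hk : lam 0 = k)
    (hinj : Set.InjOn lam (Set.Iic r))
    (hne : ∀ i ≤ r, eigSp (G.adjMatrix ℝ) (lam i) ≠ ⊥)
    (hsup : (⨆ i ∈ Finset.range (r + 1), eigSp (G.adjMatrix ℝ) (lam i)) = ⊤)
    (A : Matrix V V ℝ) (hA : A = G.adjMatrix ℝ)
    (hE0 : eigSp A (lam 0) = Submodule.span ℝ {(fun _ => 1 : V → ℝ)})
    (U : Finset V)
    (h2 : ∀ i, 2 ≤ i → i ≤ r → ∀ v ∈ eigSp A (lam i),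
      ((switchMat U).mulVec v) ⬝ᵥ (fun _ => (1 : ℝ)) = 0)
    (h0 : ¬ (∀ v ∈ eigSp A (lam 0),
      ((switchMat U).mulVec v) ⬝ᵥ (fun _ => (1 : ℝ)) = 0))
    (h1 : ¬ (∀ v ∈ eigSp A (lam 1),
      ((switchMat U).mulVec v) ⬝ᵥ (fun _ => (1 : ℝ)) = 0)) :
    2 * U.card ≠ Fintype.card V ∧
    (Fintype.card V : ℝ) *
        (mainAngle (Submodule.map (Matrix.mulVecLin (switchMat U)) (eigSp A (lam 0)))) ^ 2 =
      ((Fintype.card V : ℝ) - 2 * U.card) ^ 2 / (Fintype.card V : ℝ) ∧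
    (Fintype.card V : ℝ) *
        (mainAngle (Submodule.map (Matrix.mulVecLin (switchMat U)) (eigSp A (lam 1)))) ^ 2 =
      (Fintype.card V : ℝ) - ((Fintype.card V : ℝ) - 2 * U.card) ^ 2 / (Fintype.card V : ℝ) := by
  classical
  subst hA
  set A := G.adjMatrix ℝ with hA
  have hnV : Nonempty V := hconn.nonempty
  have hn0 : 0 < Fintype.card V := Fintype.card_pos
  set n : ℕ := Fintype.card V with hn
  have hnR : (0:ℝ) < n := by exact_mod_cast hn0
  set S := switchMat U with hS
  set L := Matrix.mulVecLin S with hL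
  set e := (WithLp.linearEquiv 2 ℝ (V → ℝ)).symm with he
  set j : V → ℝ := (fun _ => 1) with hj
  set J : EuclideanSpace ℝ V := e j with hJ
  set s : V → ℝ := S.mulVec j with hs
  set W : ℕ → Submodule ℝ (EuclideanSpace ℝ V) :=
    (fun i => ((eigSp A (lam i)).map L).map e.toLinearMap) with hW
  have hsymm : A.IsSymm := SimpleGraph.isSymm_adjMatrix G
  -- membership characterization
  have hmemW : ∀ i (x : EuclideanSpace ℝ V), x ∈ W i ↔
      ∃ v ∈ eigSp A (lam i), e (S.mulVec v) = x := by
    intro i x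
    simp only [hW, Submodule.mem_map]
    constructor
    · rintro ⟨y, ⟨v, hv, rfl⟩, rfl⟩
      exact ⟨v, hv, rfl⟩
    · rintro ⟨v, hv, rfl⟩
      exact ⟨S.mulVec v, ⟨v, hv, rfl⟩, rfl⟩
  -- eigen equations
  have heig : ∀ i (v : V → ℝ), v ∈ eigSp A (lam i) → A.mulVec v = lam i • v := by
    intro i v hv
    have := Module.End.mem_eigenspace_iff.1 hv
    simpa [Matrix.mulVecLin_apply] using this
  -- orthogonality of the W i
  have horthW : ∀ i k, i ≤ r → k ≤ r → i ≠ k →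
      ∀ x ∈ W i, ∀ y ∈ W k, (inner ℝ x y : ℝ) = 0 := by
    intro i k hi hk hik x hx y hy
    obtain ⟨v, hv, rfl⟩ := (hmemW i x).1 hx
    obtain ⟨w, hw, rfl⟩ := (hmemW k y).1 hy
    rw [he, inner_E, hS, dot_switch]
    exact eig_orth A hsymm (fun h => hik (hinj hi hk h)) (heig i v hv) (heig k w hw)
  -- for i ≥ 2, W i ⟂ J
  have hWperpJ : ∀ i, 2 ≤ i → i ≤ r → ∀ x ∈ W i, (inner ℝ x J : ℝ) = 0 := by
    intro i hi2 hir x hx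
    obtain ⟨v, hv, rfl⟩ := (hmemW i x).1 hx
    rw [hJ, he, inner_E]
    exact h2 i hi2 hir v hv
  -- surjectivity of the maps, sup = ⊤
  have hLsurj : Function.Surjective L := by
    intro x
    refine ⟨L x, ?_⟩
    show S *ᵥ (S *ᵥ x) = x
    rw [hS]; exact switch_invol U x
  have hsupW : (⨆ i ∈ Finset.range (r + 1), W i) = ⊤ := by
    have : (⨆ i ∈ Finset.range (r + 1), W i) =
        Submodule.map e.toLinearMap (Submodule.map L
          (⨆ i ∈ Finset.range (r + 1), eigSp A (lam i))) := by
      simp [hW, Submodule.map_iSup]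
    rw [this, hsup, Submodule.map_top, LinearMap.range_eq_top.2 hLsurj,
      Submodule.map_top, LinearEquiv.range]
  -- decomposition of J
  have hJmem : J ∈ ⨆ i, (⨆ _ : i ∈ Finset.range (r + 1), W i) := by
    rw [show (⨆ i, (⨆ _ : i ∈ Finset.range (r + 1), W i)) = ⊤ from hsupW]
    trivial
  obtain ⟨f, hfmem, hfsum⟩ := (Submodule.mem_iSup_iff_exists_finsupp _ _).1 hJmem
  have hfW : ∀ i ∈ Finset.range (r + 1), f i ∈ W i := by
    intro i hi
    have := hfmem i
    rwa [iSup_pos hi] at this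
  have hf0 : ∀ i, i ∉ Finset.range (r + 1) → f i = 0 := by
    intro i hi
    have := hfmem i
    rwa [iSup_neg hi, Submodule.mem_bot] at this
  have hsum : ∑ i ∈ Finset.range (r + 1), f i = J := by
    rw [← hfsum, Finsupp.sum]
    refine (Finset.sum_subset ?_ ?_).symm
    · intro i hi
      by_contra h
      exact (Finsupp.mem_support_iff.1 hi) (hf0 i h)
    · intro i _ hi
      exact Finsupp.notMem_support_iff.1 hi
  -- inner products with J
  have hinnerJ : ∀ i ∈ Finset.range (r + 1), (inner ℝ (f i) J : ℝ) = ‖f i‖ ^ 2 := by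
    intro i hi
    rw [← hsum, inner_sum]
    rw [Finset.sum_eq_single i]
    · rw [real_inner_self_eq_norm_sq]
    · intro k hk hki
      exact horthW i k (Finset.mem_range_succ_iff.1 hi) (Finset.mem_range_succ_iff.1 hk)
        (Ne.symm hki) _ (hfW i hi) _ (hfW k hk)
    · intro h; exact absurd hi h
  -- projections
  have hproj : ∀ i ∈ Finset.range (r + 1),
      (Submodule.orthogonalProjection (W i) J : EuclideanSpace ℝ V) = f i := by
    intro i hi
    show Submodule.starProjection (W i) J = f i
    apply Submodule.eq_starProjection_of_mem_of_inner_eq_zero (hfW i hi)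
    intro y hy
    rw [← hsum, ← Finset.sum_erase_add _ _ hi, add_sub_cancel_right, sum_inner]
    refine Finset.sum_eq_zero fun k hk => ?_
    have hk' := Finset.mem_of_mem_erase hk
    exact horthW k i (Finset.mem_range_succ_iff.1 hk') (Finset.mem_range_succ_iff.1 hi)
      (Finset.ne_of_mem_erase hk) _ (hfW k hk') y hy
  -- basic dot products
  have hsj : s ⬝ᵥ j = (n : ℝ) - 2 * U.card := by
    have hterm : ∀ x, (S.mulVec j) x = 1 - 2 * (if x ∈ U then (1:ℝ) else 0) := by
      intro x
      rw [hS, switch_mulVec]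
      by_cases h : x ∈ U <;> simp [h, hj] <;> norm_num
    calc s ⬝ᵥ j = ∑ x : V, (S.mulVec j) x := by
          simp [dotProduct, hj, hs]
      _ = ∑ x : V, (1 - 2 * (if x ∈ U then (1:ℝ) else 0)) :=
          Finset.sum_congr rfl fun x _ => hterm x
      _ = (n : ℝ) - 2 * U.card := by
          rw [Finset.sum_sub_distrib, ← Finset.mul_sum, Finset.sum_boole]
          simp [hn, Finset.filter_mem_eq_inter]
  have hss : s ⬝ᵥ s = (n : ℝ) := by
    rw [hs, hS, dot_switch]
    simp [dotProduct, hj, hn]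
  have hJJ : (inner ℝ J J : ℝ) = (n : ℝ) := by
    rw [hJ, he, inner_E]
    simp [dotProduct, hj, hn]
  -- nonvanishing from h0
  have h0' : s ⬝ᵥ j ≠ 0 := by
    intro hzero
    apply h0
    intro v hv
    rw [hE0] at hv
    obtain ⟨c, rfl⟩ := Submodule.mem_span_singleton.1 hv
    rw [Matrix.mulVec_smul, smul_dotProduct]
    have : S.mulVec j ⬝ᵥ j = 0 := by rw [← hs]; exact hzero
    simp [this]
  have hcard : 2 * U.card ≠ n := by
    intro hcontr
    apply h0'
    rw [hsj]
    have : 2 * (U.card : ℝ) = (n : ℝ) := by exact_mod_cast hcontr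
    linarith
  -- W 0 is a line
  have hW0 : W 0 = (ℝ ∙ (e s)) := by
    show ((eigSp A (lam 0)).map L).map e.toLinearMap = _
    rw [hE0, Submodule.map_span, Submodule.map_span, Set.image_singleton, Set.image_singleton]
    rfl
  have hproj0 : (Submodule.orthogonalProjection (W 0) J : EuclideanSpace ℝ V)
      = ((s ⬝ᵥ j) / (n : ℝ)) • e s := by
    show Submodule.starProjection (W 0) J = _
    simp only [hW0, Submodule.starProjection_singleton]
    congr 1
    rw [he, inner_E]
    have hes : ‖(WithLp.linearEquiv 2 ℝ (V → ℝ)).symm s‖ ^ 2 = (n : ℝ) := by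
      rw [← hss, ← inner_E s s]
      exact (real_inner_self_eq_norm_sq _).symm
    rw [hes]
    norm_num
  have hnorm0 : ‖(Submodule.orthogonalProjection (W 0) J : EuclideanSpace ℝ V)‖ ^ 2
      = (s ⬝ᵥ j) ^ 2 / (n : ℝ) := by
    rw [hproj0, norm_smul]
    have hes : ‖e s‖ ^ 2 = (n : ℝ) := by
      rw [← hss, ← inner_E s s, ← he]
      exact real_inner_self_eq_norm_sq (e s) |>.symm
    rw [mul_pow, hes]
    rw [Real.norm_eq_abs, sq_abs, div_pow]
    field_simp
  -- decomposition of ‖J‖²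
  have h0mem : (0 : ℕ) ∈ Finset.range (r + 1) := Finset.mem_range.2 (Nat.succ_pos r)
  have h1mem : (1 : ℕ) ∈ Finset.range (r + 1) := Finset.mem_range.2 (by omega)
  have hf0norm : ‖f 0‖ ^ 2 = (s ⬝ᵥ j) ^ 2 / (n : ℝ) := by
    rw [← hproj 0 h0mem]; exact hnorm0
  have hdecomp : (n : ℝ) = ‖f 0‖ ^ 2 + ‖f 1‖ ^ 2 := by
    have step1 : (inner ℝ J J : ℝ) = ∑ i ∈ Finset.range (r + 1), (inner ℝ (f i) J : ℝ) := by
      conv_lhs => rw [← hsum]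
      rw [sum_inner, hsum]
    have step2 : ∑ i ∈ Finset.range (r + 1), (inner ℝ (f i) J : ℝ)
        = ∑ i ∈ Finset.range 2, (inner ℝ (f i) J : ℝ) := by
      refine (Finset.sum_subset ?_ ?_).symm
      · intro i hi
        rw [Finset.mem_range] at hi ⊢
        omega
      · intro i hi hi2
        rw [Finset.mem_range] at hi2
        exact hWperpJ i (by omega) (Finset.mem_range_succ_iff.1 hi) _ (hfW i hi)
    rw [← hJJ, step1, step2, Finset.sum_range_succ, Finset.sum_range_one,
      hinnerJ 0 h0mem, hinnerJ 1 h1mem]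
  have hf1norm : ‖f 1‖ ^ 2 = (n : ℝ) - (s ⬝ᵥ j) ^ 2 / (n : ℝ) := by
    rw [← hf0norm]; linarith
  -- main angle reformulation
  have hMA : ∀ i, mainAngle (Submodule.map L (eigSp A (lam i)))
      = (1 / Real.sqrt n) * ‖(Submodule.orthogonalProjection (W i) J : EuclideanSpace ℝ V)‖ := by
    intro i
    rfl
  have hsq : ∀ x : ℝ, (n : ℝ) * ((1 / Real.sqrt n) * x) ^ 2 = x ^ 2 := by
    intro x
    rw [mul_pow, div_pow, one_pow, Real.sq_sqrt hnR.le]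
    field_simp
  refine ⟨hcard, ?_, ?_⟩
  · rw [hMA 0, hsq, hnorm0, hsj]
  · rw [hMA 1, hsq, hproj 1 h1mem, hf1norm, hsj]
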